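/- Let p be a prime with p ≠ 2 and p ≠ 5. Then ν_p(F(α(p))) = ν_p(F(p−ε)). -/

import Mathlib

/-- The restricted period length `α(p)`: the least `m ≥ 1` with `F m ≡ 0 (mod p)`. -/
noncomputable def fibEntry (p : ℕ) : ℕ :=
  sInf {m | 1 ≤ m ∧ p ∣ Nat.fib m}

/-- The natural number `p - ε` for `p ∉ {2, 5}`. -/
def pSubEps (p : ℕ) : ℕ := if p % 5 = 1 ∨ p % 5 = 4 then p - 1 else p + 1

open Polynomial in
/-- `X^(n+1) ≡ fib (n+1) * X + fib n  (mod X^2 - X - 1)`. -/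
lemma aux_fib_pow_X (p : ℕ) (n : ℕ) :
    (X ^ 2 - X - 1 : (ZMod p)[X]) ∣
      X ^ (n + 1) - (C (Nat.fib (n + 1) : ZMod p) * X + C (Nat.fib n : ZMod p)) := by
  induction n with
  | zero => simp
  | succ n ih =>
    obtain ⟨t, ht⟩ := ih
    refine ⟨X * t + C (Nat.fib (n + 1) : ZMod p), ?_⟩
    have h2 : (C (Nat.fib (n + 2) : ZMod p) : (ZMod p)[X])
        = C (Nat.fib n : ZMod p) + C (Nat.fib (n + 1) : ZMod p) := by
      rw [Nat.fib_add_two, Nat.cast_add, map_add]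
    rw [h2]
    linear_combination (X : (ZMod p)[X]) * ht

lemma aux_zmod5_sq :
    ¬IsSquare (2 : ZMod 5) ∧ ¬IsSquare (3 : ZMod 5) ∧ IsSquare (4 : ZMod 5) := by
  decide

open Polynomial in
lemma aux_prime_dvd_fib_pSubEps (p : ℕ) (hp : p.Prime) (hp2 : p ≠ 2) (hp5 : p ≠ 5) :
    p ∣ Nat.fib (pSubEps p) := by
  haveI : Fact p.Prime := ⟨hp⟩
  haveI : Fact (5 : ℕ).Prime := ⟨by norm_num⟩
  haveI : Fact (2 < p) := ⟨lt_of_le_of_ne hp.two_le (Ne.symm hp2)⟩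
  have hodd : p % 2 = 1 := Nat.odd_iff.mp (hp.odd_of_ne_two hp2)
  have hC2 : (C (2 : ZMod p) : (ZMod p)[X]) = 2 := map_ofNat C 2
  have hC5 : (C (5 : ZMod p) : (ZMod p)[X]) = 5 := map_ofNat C 5
  have h50 : (5 : ZMod p) ≠ 0 := by
    intro h
    have : p ∣ 5 := by
      have := (ZMod.natCast_eq_zero_iff 5 p).mp (by exact_mod_cast h)
      exact this
    exact hp5 ((Nat.prime_dvd_prime_iff_eq hp (by norm_num)).mp this)
  have h20 : (2 : ZMod p) ≠ 0 := by
    intro h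
    have : p ∣ 2 := by
      have := (ZMod.natCast_eq_zero_iff 2 p).mp (by exact_mod_cast h)
      exact this
    exact hp2 ((Nat.prime_dvd_prime_iff_eq hp (by norm_num)).mp this)
  set c : ZMod p := (5 : ZMod p) ^ (p / 2) with hcdef
  have hc : c = 1 ∨ c = -1 := by
    have hsq : c * c = 1 := by
      rw [hcdef, ← pow_add]
      have : p / 2 + p / 2 = p - 1 := by omega
      rw [this]
      exact ZMod.pow_card_sub_one_eq_one h50
    exact mul_self_eq_one_iff.mp hsq
  -- Frobenius computation
  set f : (ZMod p)[X] := X ^ 2 - X - 1 with hfdef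
  have hfrob : ((2 : (ZMod p)[X]) * X - 1) ^ p = 2 * X ^ p - 1 := by
    have h1 : ((2 : (ZMod p)[X]) * X - 1) = 2 * X + (-1) := by ring
    rw [h1, add_pow_char, mul_pow]
    have h2 : ((2 : (ZMod p)[X])) ^ p = 2 := by
      rw [← hC2, ← map_pow, ZMod.pow_card]
    have h3 : ((-1 : (ZMod p)[X])) ^ p = -1 := Odd.neg_one_pow (Nat.odd_iff.mpr hodd)
    rw [h2, h3]
    ring
  have hsq5 : f ∣ ((2 : (ZMod p)[X]) * X - 1) ^ 2 - C (5 : ZMod p) := by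
    refine ⟨4, ?_⟩
    rw [hC5, hfdef]; ring
  have hpow : f ∣ (2 * X ^ p - 1) - ((2 : (ZMod p)[X]) * X - 1) * C c := by
    have hdec : ((2 : (ZMod p)[X]) * X - 1) ^ p
        = (((2 : (ZMod p)[X]) * X - 1) ^ 2) ^ (p / 2) * ((2 : (ZMod p)[X]) * X - 1) := by
      rw [← pow_mul, ← pow_succ]
      congr 1
      omega
    have hCc : (C c : (ZMod p)[X]) = (C (5 : ZMod p)) ^ (p / 2) := by
      rw [hcdef, map_pow]
    have hd : f ∣ (((2 : (ZMod p)[X]) * X - 1) ^ 2) ^ (p / 2) - (C (5 : ZMod p)) ^ (p / 2) :=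
      dvd_trans hsq5 (sub_dvd_pow_sub_pow _ _ _)
    obtain ⟨t, ht⟩ := hd
    refine ⟨t * ((2 : (ZMod p)[X]) * X - 1), ?_⟩
    rw [← hfrob, hdec, hCc]
    linear_combination ((2 : (ZMod p)[X]) * X - 1) * ht
  have h1 := aux_fib_pow_X p (p - 1)
  rw [show p - 1 + 1 = p by omega] at h1
  -- combine
  set Fp : ZMod p := (Nat.fib p : ZMod p) with hFp
  set Fq : ZMod p := (Nat.fib (p - 1) : ZMod p) with hFq
  have hg : f ∣ C (2 * Fp - 2 * c) * X + C (2 * Fq - 1 + c) := by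
    obtain ⟨t1, ht1⟩ := h1
    obtain ⟨t2, ht2⟩ := hpow
    refine ⟨t2 - 2 * t1, ?_⟩
    have e1 : (C (2 * Fp - 2 * c) : (ZMod p)[X]) = 2 * C Fp - 2 * C c := by
      rw [map_sub, map_mul, map_mul, hC2]
    have e2 : (C (2 * Fq - 1 + c) : (ZMod p)[X]) = 2 * C Fq - 1 + C c := by
      rw [map_add, map_sub, map_mul, hC2, map_one]
    rw [e1, e2]
    linear_combination ht2 - 2 * ht1
  have hg0 : (C (2 * Fp - 2 * c) : (ZMod p)[X]) * X + C (2 * Fq - 1 + c) = 0 := by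
    by_contra hne
    have hdf : f.degree = 2 := by
      rw [hfdef]
      compute_degree!
    have hdg : (C (2 * Fp - 2 * c) * X + C (2 * Fq - 1 + c) : (ZMod p)[X]).degree ≤ 1 := by
      compute_degree
    have := Polynomial.degree_le_of_dvd hg hne
    rw [hdf] at this
    exact absurd (this.trans hdg) (by norm_num)
  have hcoeff1 : 2 * Fp - 2 * c = 0 := by
    have := congrArg (fun q => Polynomial.coeff q 1) hg0
    simpa [Polynomial.coeff_one] using this
  have hcoeff0 : 2 * Fq - 1 + c = 0 := by
    have := congrArg (fun q => Polynomial.coeff q 0) hg0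
    simpa [Polynomial.coeff_one] using this
  -- relate c to p % 5
  have hEuler : IsSquare (5 : ZMod p) ↔ c = 1 := ZMod.euler_criterion p h50
  have hQR : IsSquare ((p : ZMod 5)) ↔ IsSquare ((5 : ℕ) : ZMod p) :=
    ZMod.exists_sq_eq_prime_iff_of_mod_four_eq_one (by norm_num) hp2
  have h5p : ((5 : ℕ) : ZMod p) = (5 : ZMod p) := by push_cast; ring
  have hmod : (p % 5 = 1 ∨ p % 5 = 4) ↔ c = 1 := by
    rw [← hEuler, ← h5p, ← hQR, ← ZMod.natCast_mod p 5]
    have h5ndvd : p % 5 ≠ 0 := by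
      intro h
      have h5d : (5 : ℕ) ∣ p := Nat.dvd_of_mod_eq_zero h
      exact hp5 ((Nat.prime_dvd_prime_iff_eq (by norm_num) hp).mp h5d).symm
    have hlt : p % 5 < 5 := Nat.mod_lt _ (by norm_num)
    interval_cases h : p % 5 <;> simp_all <;> simp only [aux_zmod5_sq.1, aux_zmod5_sq.2.1, aux_zmod5_sq.2.2, not_false_eq_true]
  unfold pSubEps
  split_ifs with h5mod
  · -- c = 1, Fq = 0
    have hc1 : c = 1 := hmod.mp h5mod
    have : 2 * Fq = 0 := by
      have := hcoeff0
      rw [hc1] at this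
      linear_combination this
    have hFq0 : Fq = 0 := by
      rcases mul_eq_zero.mp this with h | h
      · exact absurd h h20
      · exact h
    exact (ZMod.natCast_eq_zero_iff _ p).mp hFq0
  · -- c = -1
    have hc1 : c = -1 := by
      rcases hc with h | h
      · exact absurd (hmod.mpr h) h5mod
      · exact h
    have hFq1 : Fq = 1 := by
      have h2Fq : 2 * Fq = 2 * 1 := by
        rw [hc1] at hcoeff0
        linear_combination hcoeff0
      exact mul_left_cancel₀ h20 h2Fq
    have hFpm1 : Fp = -1 := by
      have h2Fp : 2 * Fp = 2 * (-1) := by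
        rw [hc1] at hcoeff1
        linear_combination hcoeff1
      exact mul_left_cancel₀ h20 h2Fp
    have hfib : Nat.fib (p + 1) = Nat.fib (p - 1) + Nat.fib p := by
      have := Nat.fib_add_two (n := p - 1)
      rw [show p - 1 + 2 = p + 1 by omega, show p - 1 + 1 = p by omega] at this
      exact this
    have : ((Nat.fib (p + 1) : ZMod p)) = 0 := by
      rw [hfib]
      push_cast
      rw [← hFq, ← hFp, hFq1, hFpm1]
      ring
    exact (ZMod.natCast_eq_zero_iff _ p).mp this

/-- The key congruences: `fib(kα)·fib(α+1) ≡ k·fib(α)·fib(α+1)^k (mod fib(α)²)` and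
`fib(kα+1) ≡ fib(α+1)^k (mod fib α)`, in `ℤ` with explicit witnesses. -/
lemma aux_fib_mul_key (β : ℕ) (k : ℕ) :
    ∃ s t : ℤ,
      (Nat.fib (k * (β + 1)) : ℤ) * Nat.fib (β + 2)
          = (k : ℤ) * Nat.fib (β + 1) * (Nat.fib (β + 2) : ℤ) ^ k
            + (Nat.fib (β + 1) : ℤ) ^ 2 * s
      ∧ (Nat.fib (k * (β + 1) + 1) : ℤ) = (Nat.fib (β + 2) : ℤ) ^ k + (Nat.fib (β + 1) : ℤ) * t := by
  induction k with
  | zero => exact ⟨0, 0, by simp, by simp⟩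
  | succ k ih =>
    obtain ⟨s, t, ih1, ih2⟩ := ih
    have hβ : (Nat.fib β : ℤ) = (Nat.fib (β + 2) : ℤ) - Nat.fib (β + 1) := by
      rw [Nat.fib_add_two]; push_cast; ring
    have e1 : (Nat.fib ((k + 1) * (β + 1)) : ℤ)
        = (Nat.fib (k * (β + 1)) : ℤ) * Nat.fib β
          + (Nat.fib (k * (β + 1) + 1) : ℤ) * Nat.fib (β + 1) := by
      have h := Nat.fib_add (k * (β + 1)) β
      rw [show k * (β + 1) + β + 1 = (k + 1) * (β + 1) by ring] at h
      exact_mod_cast congrArg (Nat.cast : ℕ → ℤ) h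
    have e2 : (Nat.fib ((k + 1) * (β + 1) + 1) : ℤ)
        = (Nat.fib (k * (β + 1)) : ℤ) * Nat.fib (β + 1)
          + (Nat.fib (k * (β + 1) + 1) : ℤ) * Nat.fib (β + 2) := by
      have h := Nat.fib_add (k * (β + 1)) (β + 1)
      rw [show k * (β + 1) + (β + 1) + 1 = (k + 1) * (β + 1) + 1 by ring] at h
      exact_mod_cast congrArg (Nat.cast : ℕ → ℤ) h
    refine ⟨s * ((Nat.fib (β + 2) : ℤ) - Nat.fib (β + 1)) - (k : ℤ) * (Nat.fib (β + 2) : ℤ) ^ k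
        + t * Nat.fib (β + 2), (Nat.fib (k * (β + 1)) : ℤ) + t * Nat.fib (β + 2), ?_, ?_⟩
    · push_cast
      linear_combination (Nat.fib (β + 2) : ℤ) * e1
        + ((Nat.fib (β + 2) : ℤ) - Nat.fib (β + 1)) * ih1
        + (Nat.fib (β + 1) : ℤ) * Nat.fib (β + 2) * ih2
        + (Nat.fib (k * (β + 1)) : ℤ) * Nat.fib (β + 2) * hβ
    · linear_combination e2 + (Nat.fib (β + 2) : ℤ) * ih2

lemma aux_padicValNat_fib_mul (p α k : ℕ) (hp : p.Prime) (hα : 1 ≤ α)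
    (hpF : p ∣ Nat.fib α) (hk0 : k ≠ 0) (hpk : ¬p ∣ k) :
    padicValNat p (Nat.fib (k * α)) = padicValNat p (Nat.fib α) := by
  haveI : Fact p.Prime := ⟨hp⟩
  obtain ⟨β, rfl⟩ : ∃ β, α = β + 1 := ⟨α - 1, by omega⟩
  set F := Nat.fib (β + 1) with hF
  set G := Nat.fib (β + 2) with hG
  set A := Nat.fib (k * (β + 1)) with hA
  set v := padicValNat p F with hv
  have hF0 : F ≠ 0 := (Nat.fib_pos.2 (by omega)).ne'
  have hG0 : G ≠ 0 := (Nat.fib_pos.2 (by omega)).ne'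
  have hA0 : A ≠ 0 := (Nat.fib_pos.2 (Nat.mul_pos (Nat.pos_of_ne_zero hk0) (by omega))).ne'
  have hv1 : 1 ≤ v := one_le_padicValNat_of_dvd hF0 hpF
  have hpG : ¬p ∣ G := by
    intro h
    have hd : p ∣ Nat.gcd F G := Nat.dvd_gcd hpF h
    rw [Nat.fib_coprime_fib_succ (β + 1)] at hd
    exact hp.one_lt.ne' (Nat.dvd_one.mp hd)
  have hvG : padicValNat p G = 0 := padicValNat.eq_zero_of_not_dvd hpG
  have hvK : padicValNat p k = 0 := padicValNat.eq_zero_of_not_dvd hpk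
  have hvGk : padicValNat p (G ^ k) = 0 :=
    padicValNat.eq_zero_of_not_dvd (fun h => hpG (hp.dvd_of_dvd_pow h))
  -- valuation of k * F * G^k is v
  have hrhs : padicValNat p (k * F * G ^ k) = v := by
    rw [padicValNat.mul (mul_ne_zero hk0 hF0) (pow_ne_zero _ hG0),
      padicValNat.mul hk0 hF0, hvK, hvGk, ← hv]
    omega
  have hrhs0 : k * F * G ^ k ≠ 0 := mul_ne_zero (mul_ne_zero hk0 hF0) (pow_ne_zero _ hG0)
  obtain ⟨s, t, h1, _⟩ := aux_fib_mul_key β k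
  have hpvF : (p : ℤ) ^ v ∣ (F : ℤ) := by
    exact_mod_cast Int.natCast_dvd_natCast.mpr (pow_padicValNat_dvd (p := p) (n := F))
  have hdvd1 : p ^ v ∣ A * G := by
    have h : (p : ℤ) ^ v ∣ (A : ℤ) * G := by
      rw [h1]
      refine dvd_add ((hpvF.mul_left _).mul_right _) (Dvd.dvd.mul_right ?_ s)
      exact hpvF.trans (dvd_pow_self _ two_ne_zero)
    exact_mod_cast h
  have hndvd1 : ¬p ^ (v + 1) ∣ A * G := by
    intro hcon
    have hc : (p : ℤ) ^ (v + 1) ∣ (A : ℤ) * G := by exact_mod_cast hcon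
    have hFF : (p : ℤ) ^ (v + 1) ∣ (F : ℤ) ^ 2 * s := by
      refine Dvd.dvd.mul_right ?_ s
      calc (p : ℤ) ^ (v + 1) ∣ (p : ℤ) ^ (2 * v) := pow_dvd_pow _ (by omega)
        _ = ((p : ℤ) ^ v) ^ 2 := by rw [← pow_mul, mul_comm]
        _ ∣ (F : ℤ) ^ 2 := pow_dvd_pow_of_dvd hpvF 2
    have hd : (p : ℤ) ^ (v + 1) ∣ (k : ℤ) * F * G ^ k := by
      have hsub := dvd_sub hc hFF
      have heq : (k : ℤ) * F * G ^ k = (A : ℤ) * G - (F : ℤ) ^ 2 * s := by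
        linear_combination -h1
      rw [heq]; exact hsub
    have hdn : p ^ (v + 1) ∣ k * F * G ^ k := by
      have h' : ((p ^ (v + 1) : ℕ) : ℤ) ∣ ((k * F * G ^ k : ℕ) : ℤ) := by push_cast; exact hd
      exact_mod_cast h'
    have := (padicValNat_dvd_iff_le hrhs0).mp hdn
    omega
  have hAG0 : A * G ≠ 0 := mul_ne_zero hA0 hG0
  have hle : v ≤ padicValNat p (A * G) := (padicValNat_dvd_iff_le hAG0).mp hdvd1
  have hlt : padicValNat p (A * G) < v + 1 := by
    by_contra hcon
    exact hndvd1 ((padicValNat_dvd_iff_le hAG0).mpr (by omega))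
  rw [padicValNat.mul hA0 hG0, hvG] at hle hlt
  omega

theorem padicValNat_fib_entry_eq_wall_exponent
    (p : ℕ) (hp : p.Prime) (hp2 : p ≠ 2) (hp5 : p ≠ 5) :
    padicValNat p (Nat.fib (fibEntry p)) = padicValNat p (Nat.fib (pSubEps p)) := by
  haveI : Fact p.Prime := ⟨hp⟩
  have hp3 : 3 ≤ p := by
    have := hp.two_le
    omega
  have hB : p ∣ Nat.fib (pSubEps p) := aux_prime_dvd_fib_pSubEps p hp hp2 hp5
  have hps1 : 1 ≤ pSubEps p := by unfold pSubEps; split <;> omega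
  have hpsp : ¬p ∣ pSubEps p := by
    unfold pSubEps
    split <;> intro h
    · have := Nat.le_of_dvd (by omega) h
      omega
    · have h1 : p ∣ 1 := by
        have := Nat.dvd_sub h (dvd_refl p)
        simpa using this
      have := Nat.le_of_dvd one_pos h1
      omega
  have hmem : 1 ≤ fibEntry p ∧ p ∣ Nat.fib (fibEntry p) :=
    Nat.sInf_mem (⟨pSubEps p, hps1, hB⟩ : Set.Nonempty {m | 1 ≤ m ∧ p ∣ Nat.fib m})
  have hdvd : fibEntry p ∣ pSubEps p := by
    have h1 : p ∣ Nat.gcd (Nat.fib (fibEntry p)) (Nat.fib (pSubEps p)) :=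
      Nat.dvd_gcd hmem.2 hB
    rw [← Nat.fib_gcd] at h1
    have hg1 : 1 ≤ Nat.gcd (fibEntry p) (pSubEps p) := Nat.gcd_pos_of_pos_right _ (by omega)
    have hle : fibEntry p ≤ Nat.gcd (fibEntry p) (pSubEps p) := Nat.sInf_le ⟨hg1, h1⟩
    have hge : Nat.gcd (fibEntry p) (pSubEps p) ∣ fibEntry p := Nat.gcd_dvd_left _ _
    have heq : Nat.gcd (fibEntry p) (pSubEps p) = fibEntry p :=
      Nat.le_antisymm (Nat.le_of_dvd (by omega) hge) hle
    exact heq ▸ Nat.gcd_dvd_right (fibEntry p) (pSubEps p)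
  obtain ⟨k, hk⟩ := hdvd
  have hk0 : k ≠ 0 := by
    rintro rfl
    rw [Nat.mul_zero] at hk
    omega
  have hpk : ¬p ∣ k := by
    intro h
    exact hpsp (hk ▸ Dvd.dvd.mul_left h (fibEntry p))
  rw [hk, mul_comm]
  exact (aux_padicValNat_fib_mul p (fibEntry p) k hp hmem.1 hmem.2 hk0 hpk).symm
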